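/- Let S be a sequence, c a classification of symbols into classes, S_c the subsequence of S restricted to positions of class c, and for a range [i..j] of S let [i_c..j_c] be the induced range in S_c (i_c = rank_c(K,i−1)+1, j_c = rank_c(K,j), where K[k] is the class of S[k]). Then for any symbol a of class c, a is a τ-majority of S[i..j] if and only if a is a τ_c-majority of S_c[i_c..j_c], where τ_c = τ(j−i+1)/(j_c−i_c+1) (assuming j_c ≥ i_c). -/
import Mathlib


/-- Number of occurrences of `a` in `S[i..j]`. -/
def occCount {A : Type*} [DecidableEq A] (S : ℕ → A) (a : A) (i j : ℕ) : ℕ :=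
  ((Finset.Icc i j).filter (fun k => S k = a)).card

/-- Rank of class `c` in `K[1..k]`. -/
def classRank {P : Type*} [DecidableEq P] (K : ℕ → P) (c : P) (k : ℕ) : ℕ :=
  ((Finset.Icc 1 k).filter (fun k' => K k' = c)).card

/-- Let `cl` classify symbols, `K[k] = cl(S[k])`, and let `Sc` be the subsequence of `S`
(of length `N`) at the positions of class `c`, enumerated in increasing order by `e`.
For a range `[i..j]` of `S`, let `i_c = rank_c(K,i-1)+1` and `j_c = rank_c(K,j)` be the
induced range in `Sc`. Then for any symbol `a` of class `c`, `a` is a `τ`-majority of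
`S[i..j]` iff `a` is a `τ_c`-majority of `Sc[i_c..j_c]`,
where `τ_c = τ(j-i+1)/(j_c-i_c+1)`. -/
theorem majority_in_class_subsequence {A P : Type*} [DecidableEq A] [DecidableEq P]
    (n : ℕ) (S : ℕ → A) (cl : A → P) (K : ℕ → P) (hK : ∀ k, K k = cl (S k))
    (c : P) (N : ℕ) (hN : N = ((Finset.Icc 1 n).filter (fun k => cl (S k) = c)).card)
    (e : ℕ → ℕ) (hmono : StrictMonoOn e (Set.Icc 1 N))
    (himg : ∀ m ∈ Finset.Icc 1 N, e m ∈ Finset.Icc 1 n ∧ cl (S (e m)) = c)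
    (hsurj : ∀ k ∈ Finset.Icc 1 n, cl (S k) = c → ∃ m ∈ Finset.Icc 1 N, e m = k)
    (Sc : ℕ → A) (hSc : ∀ m ∈ Finset.Icc 1 N, Sc m = S (e m))
    (i j : ℕ) (h1i : 1 ≤ i) (hij : i ≤ j) (hjn : j ≤ n)
    (ic jc : ℕ) (hic : ic = classRank K c (i - 1) + 1) (hjc : jc = classRank K c j)
    (hicjc : ic ≤ jc)
    (τ : ℝ) (hτ0 : 0 < τ) (hτ1 : τ ≤ 1)
    (τc : ℝ) (hτc : τc = τ * ((j - i + 1 : ℕ) : ℝ) / ((jc - ic + 1 : ℕ) : ℝ))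
    (a : A) (ha : cl a = c) :
    (τ * ((j - i + 1 : ℕ) : ℝ) < (occCount S a i j : ℝ)) ↔
    (τc * ((jc - ic + 1 : ℕ) : ℝ) < (occCount Sc a ic jc : ℝ)) := by
  classical
  -- rank is monotone
  have hrank_mono : ∀ {x y : ℕ}, x ≤ y → classRank K c x ≤ classRank K c y := by
    intro x y hxy
    apply Finset.card_le_card
    intro k hk
    simp only [Finset.mem_filter, Finset.mem_Icc] at hk ⊢
    exact ⟨⟨hk.1.1, hk.1.2.trans hxy⟩, hk.2⟩
  -- rank increment at a class-c position
  have hrank_step : ∀ x : ℕ, 1 ≤ x → K x = c →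
      classRank K c x = classRank K c (x - 1) + 1 := by
    intro x hx hxc
    unfold classRank
    have hins : Finset.Icc 1 x = insert x (Finset.Icc 1 (x - 1)) := by
      ext k; simp only [Finset.mem_insert, Finset.mem_Icc]; omega
    rw [hins, Finset.filter_insert, if_pos hxc, Finset.card_insert_of_notMem]
    simp only [Finset.mem_filter, Finset.mem_Icc]
    omega
  -- rank at e m equals m
  have hrank_e : ∀ m ∈ Finset.Icc 1 N, classRank K c (e m) = m := by
    intro m hm
    have hm' := Finset.mem_Icc.mp hm
    have hset : (Finset.Icc 1 (e m)).filter (fun k' => K k' = c)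
        = (Finset.Icc 1 m).image e := by
      ext k
      simp only [Finset.mem_filter, Finset.mem_Icc, Finset.mem_image]
      constructor
      · rintro ⟨⟨hk1, hk2⟩, hkc⟩
        have hkn : k ≤ n := by
          have := (himg m hm).1
          simp only [Finset.mem_Icc] at this
          omega
        obtain ⟨m', hm', hem'⟩ := hsurj k (Finset.mem_Icc.mpr ⟨hk1, hkn⟩)
          (by rw [← hK]; exact hkc)
        have hm'' := Finset.mem_Icc.mp hm'
        refine ⟨m', ⟨hm''.1, ?_⟩, hem'⟩
        by_contra hlt
        push_neg at hlt
        have : e m < e m' := hmono (Set.mem_Icc.mpr (Finset.mem_Icc.mp hm)) (Set.mem_Icc.mpr hm'') hlt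
        omega
      · rintro ⟨m', ⟨hm'1, hm'2⟩, rfl⟩
        have hm'N : m' ∈ Finset.Icc 1 N := Finset.mem_Icc.mpr ⟨hm'1, hm'2.trans hm'.2⟩
        have h1 := (himg m' hm'N).1
        simp only [Finset.mem_Icc] at h1
        have hle : e m' ≤ e m :=
          hmono.monotoneOn (Set.mem_Icc.mpr (Finset.mem_Icc.mp hm'N))
            (Set.mem_Icc.mpr hm') hm'2
        exact ⟨⟨h1.1, hle⟩, by rw [hK]; exact (himg m' hm'N).2⟩
    rw [classRank, hset, Finset.card_image_of_injOn, Nat.card_Icc]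
    · omega
    · intro x hx y hy hxy
      have hx' : x ∈ Set.Icc 1 N := by
        have := Finset.mem_Icc.mp hx; exact Set.mem_Icc.mpr ⟨this.1, this.2.trans hm'.2⟩
      have hy' : y ∈ Set.Icc 1 N := by
        have := Finset.mem_Icc.mp hy; exact Set.mem_Icc.mpr ⟨this.1, this.2.trans hm'.2⟩
      exact hmono.injOn hx' hy' hxy
  have hjcN : jc ≤ N := by
    have : classRank K c j ≤ classRank K c n := hrank_mono hjn
    have hNn : classRank K c n = N := by
      rw [hN, classRank]
      congr 1
      ext k
      simp [hK]
    omega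
  -- key range equivalence
  have hrange : ∀ m ∈ Finset.Icc 1 N, (e m ∈ Finset.Icc i j ↔ m ∈ Finset.Icc ic jc) := by
    intro m hm
    have hmN := Finset.mem_Icc.mp hm
    have hrm := hrank_e m hm
    have hem1 : 1 ≤ e m := by
      have := (himg m hm).1; exact (Finset.mem_Icc.mp this).1
    have hemc : K (e m) = c := by rw [hK]; exact (himg m hm).2
    have hstep := hrank_step (e m) hem1 hemc
    simp only [Finset.mem_Icc]
    constructor
    · rintro ⟨h1, h2⟩
      constructor
      · -- ic ≤ m
        have : classRank K c (i - 1) ≤ classRank K c (e m - 1) := hrank_mono (by omega)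
        omega
      · -- m ≤ jc
        have : classRank K c (e m) ≤ classRank K c j := hrank_mono h2
        omega
    · rintro ⟨h1, h2⟩
      constructor
      · by_contra hlt
        push_neg at hlt
        have : classRank K c (e m) ≤ classRank K c (i - 1) := hrank_mono (by omega)
        omega
      · by_contra hlt
        push_neg at hlt
        have : classRank K c j ≤ classRank K c (e m - 1) := hrank_mono (by omega)
        omega
  -- occurrence counts coincide
  have hocc : occCount S a i j = occCount Sc a ic jc := by
    unfold occCount
    symm
    apply Finset.card_bij (fun m _ => e m)
    · intro m hm
      simp only [Finset.mem_filter] at hm ⊢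
      have hmic := Finset.mem_Icc.mp hm.1
      have hmN : m ∈ Finset.Icc 1 N := Finset.mem_Icc.mpr ⟨by omega, hmic.2.trans hjcN⟩
      refine ⟨(hrange m hmN).mpr hm.1, ?_⟩
      rw [← hSc m hmN]; exact hm.2
    · intro x hx y hy hxy
      simp only [Finset.mem_filter] at hx hy
      have hxic := Finset.mem_Icc.mp hx.1
      have hyic := Finset.mem_Icc.mp hy.1
      exact hmono.injOn (Set.mem_Icc.mpr ⟨by omega, hxic.2.trans hjcN⟩)
        (Set.mem_Icc.mpr ⟨by omega, hyic.2.trans hjcN⟩) hxy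
    · intro k hk
      simp only [Finset.mem_filter] at hk
      have hkij := Finset.mem_Icc.mp hk.1
      have hkn : k ∈ Finset.Icc 1 n := Finset.mem_Icc.mpr ⟨h1i.trans hkij.1, hkij.2.trans hjn⟩
      obtain ⟨m, hm, rfl⟩ := hsurj k hkn (by rw [hk.2]; exact ha)
      refine ⟨m, ?_, rfl⟩
      simp only [Finset.mem_filter]
      exact ⟨(hrange m hm).mp hk.1, by rw [hSc m hm]; exact hk.2⟩
  -- arithmetic
  have hpos : (0 : ℝ) < ((jc - ic + 1 : ℕ) : ℝ) := by
    have : 1 ≤ jc - ic + 1 := by omega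
    exact_mod_cast Nat.lt_of_lt_of_le Nat.zero_lt_one this
  have harith : τc * ((jc - ic + 1 : ℕ) : ℝ) = τ * ((j - i + 1 : ℕ) : ℝ) := by
    rw [hτc, div_mul_cancel₀ _ (ne_of_gt hpos)]
  rw [harith, hocc]
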